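/- Let X be a real or complex Banach space, let (x_n) ⊂ X and (x*_n) ⊂ X* be biorthogonal (x*_k(x_n) = δ_{kn}), and let (y_n) ⊂ X satisfy ∑_{n=1}^∞ ‖y_n − x_n‖·‖x*_n‖ < 1. Suppose moreover that x*_k(y_n) = 0 for every pair (k,n) with k > n. Then there exists a sequence (y*_n) in X* biorthogonal to (y_n) (y*_k(y_n) = δ_{kn}) such that, for every n, y*_n belongs to the closure, with respect to the weak-* topology of X*, of the linear span of {x*_k : k ≥ n}. -/

import Mathlib

open ContinuousLinearMap

theorem tsum_mem_of_isClosed {𝕜 M : Type*} [NontriviallyNormedField 𝕜]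
    [NormedAddCommGroup M] [NormedSpace 𝕜 M] {ι : Type*}
    (p : Submodule 𝕜 M) (hp : IsClosed (p : Set M)) (f : ι → M)
    (hf : ∀ i, f i ∈ p) : (∑' i, f i) ∈ p := by
  by_cases h : Summable f
  · refine hp.mem_of_tendsto h.hasSum ?_
    exact Filter.Eventually.of_forall fun s => Submodule.sum_mem p fun i _ => hf i
  · rw [tsum_eq_zero_of_not_summable h]; exact p.zero_mem

/-- Let `X` be a real or complex Banach space, `x ⊂ X` and `xs ⊂ X*`
biorthogonal, and `y ⊂ X` with `∑ ‖y n - x n‖ * ‖xs n‖ < 1`. Suppose moreover that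
`xs k (y n) = 0` whenever `k > n`. Then there is a sequence `ys` in `X*` biorthogonal to `y`
such that, for every `n`, `ys n` belongs to the weak-* closure of the linear span of
`{xs k : k ≥ n}`. -/
theorem statement4 {𝕜 : Type*} [RCLike 𝕜] {X : Type*} [NormedAddCommGroup X]
    [NormedSpace 𝕜 X] [CompleteSpace X]
    (x y : ℕ → X) (xs : ℕ → X →L[𝕜] 𝕜)
    (hbi : ∀ k n, xs k (x n) = if k = n then 1 else 0)
    (hsum : Summable fun n => ‖y n - x n‖ * ‖xs n‖)
    (hlt : ∑' n, ‖y n - x n‖ * ‖xs n‖ < 1)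
    (htri : ∀ k n : ℕ, n < k → xs k (y n) = 0) :
    ∃ ys : ℕ → X →L[𝕜] 𝕜,
      (∀ k n, ys k (y n) = if k = n then 1 else 0) ∧
      (∀ n, StrongDual.toWeakDual (ys n) ∈
        closure (StrongDual.toWeakDual ''
          ((Submodule.span 𝕜 (xs '' {k | n ≤ k}) : Submodule 𝕜 (X →L[𝕜] 𝕜)) :
            Set (X →L[𝕜] 𝕜)))) := by
  classical
  set g : ℕ → X →L[𝕜] X := fun m => smulRight (xs m) (y m - x m) with hg
  have hgnorm : ∀ m, ‖g m‖ = ‖y m - x m‖ * ‖xs m‖ := by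
    intro m
    rw [hg]; rw [norm_smulRight_apply, mul_comm]
  have hgsum : Summable g := by
    refine Summable.of_norm ?_
    simpa only [hgnorm] using hsum
  set S : X →L[𝕜] X := ∑' m, g m with hS
  have hSnorm : ‖S‖ < 1 := by
    calc ‖S‖ ≤ ∑' m, ‖g m‖ := norm_tsum_le_tsum_norm (by simpa only [hgnorm] using hsum)
    _ = ∑' m, ‖y m - x m‖ * ‖xs m‖ := by simp only [hgnorm]
    _ < 1 := hlt
  have hSneg : ‖-S‖ < 1 := by rwa [norm_neg]
  -- apply S
  have hSapp : ∀ z : X, S z = ∑' m, xs m z • (y m - x m) := by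
    intro z
    exact ContinuousLinearMap.map_tsum (ContinuousLinearMap.apply 𝕜 X z) hgsum
  have hSx : ∀ n, S (x n) = y n - x n := by
    intro n
    rw [hSapp]
    rw [tsum_eq_single n]
    · simp [hbi]
    · intro m hm
      simp [hbi, hm]
  set T : (X →L[𝕜] X)ˣ := Units.oneSub (-S) hSneg with hT
  have hTx : ∀ n, (T : X →L[𝕜] X) (x n) = y n := by
    intro n
    have : (T : X →L[𝕜] X) = 1 - (-S) := rfl
    rw [this]
    simp [hSx n]
  have hTinvT : ∀ z : X, (↑T⁻¹ : X →L[𝕜] X) ((T : X →L[𝕜] X) z) = z := by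
    intro z
    have h1 : (↑T⁻¹ : X →L[𝕜] X) * (T : X →L[𝕜] X) = 1 := T.inv_mul
    calc (↑T⁻¹ : X →L[𝕜] X) ((T : X →L[𝕜] X) z)
        = ((↑T⁻¹ : X →L[𝕜] X) * (T : X →L[𝕜] X)) z := rfl
      _ = z := by rw [h1]; rfl
  refine ⟨fun n => (xs n).comp (↑T⁻¹ : X →L[𝕜] X), ?_, ?_⟩
  · intro k n
    have : (↑T⁻¹ : X →L[𝕜] X) (y n) = x n := by
      rw [← hTx n, hTinvT]
    simp [this, hbi]
  · intro n
    -- norm-closed span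
    set M : Submodule 𝕜 (X →L[𝕜] 𝕜) :=
      (Submodule.span 𝕜 (xs '' {k | n ≤ k})).topologicalClosure with hM
    have hMclosed : IsClosed (M : Set (X →L[𝕜] 𝕜)) :=
      Submodule.isClosed_topologicalClosure _
    have hMspan : ∀ k, n ≤ k → xs k ∈ M := fun k hk =>
      Submodule.le_topologicalClosure _ (Submodule.subset_span ⟨k, hk, rfl⟩)
    -- composition with S of generators
    have hgen : ∀ m, n ≤ m → (xs m).comp S ∈ M := by
      intro m hm
      have heq : (xs m).comp S = ∑' j, (xs m (y j - x j)) • xs j := by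
        refine (ContinuousLinearMap.map_tsum ((ContinuousLinearMap.compL 𝕜 X X 𝕜) (xs m))
          hgsum).trans (tsum_congr fun j => ?_)
        ext z
        simp [g, mul_comm]
      rw [heq]
      refine tsum_mem_of_isClosed M hMclosed _ fun j => ?_
      rcases lt_or_ge j m with hj | hj
      · have h0 : xs m (y j - x j) = 0 := by
          rw [map_sub, htri m j hj, hbi]
          simp [Nat.ne_of_gt hj]
        rw [h0]
        have : (0:𝕜) • xs j = 0 := zero_smul 𝕜 (xs j)
        rw [this]
        exact M.zero_mem
      · exact M.smul_mem _ (hMspan j (le_trans hm hj))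
    -- M is invariant under precomposition with S
    have hstep : ∀ f : X →L[𝕜] 𝕜, f ∈ M → f.comp S ∈ M := by
      intro f hf
      set P : (X →L[𝕜] 𝕜) →L[𝕜] (X →L[𝕜] 𝕜) := (ContinuousLinearMap.compL 𝕜 X X 𝕜).flip S with hP
      have hPapp : ∀ h : X →L[𝕜] 𝕜, P h = h.comp S := fun _ => rfl
      set p : Submodule 𝕜 (X →L[𝕜] 𝕜) := M.comap (P : (X →L[𝕜] 𝕜) →ₗ[𝕜] (X →L[𝕜] 𝕜)) with hp
      have hpclosed : IsClosed (p : Set (X →L[𝕜] 𝕜)) := hMclosed.preimage P.continuous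
      have hle : M ≤ p := by
        refine Submodule.topologicalClosure_minimal _ (Submodule.span_le.2 ?_) hpclosed
        rintro _ ⟨k, hk, rfl⟩
        exact hgen k hk
      exact hle hf
    -- powers
    have hpow : ∀ j : ℕ, (xs n).comp ((-S) ^ j) ∈ M := by
      intro j
      induction j with
      | zero => simpa [ContinuousLinearMap.one_def] using hMspan n le_rfl
      | succ j ih =>
        have : (xs n).comp ((-S) ^ (j + 1)) = -(((xs n).comp ((-S) ^ j)).comp S) := by
          rw [pow_succ]
          ext z
          simp [ContinuousLinearMap.mul_apply]
        rw [this]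
        exact M.neg_mem (hstep _ ih)
    -- T⁻¹ as geometric series
    have hTinv : (↑T⁻¹ : X →L[𝕜] X) = ∑' j : ℕ, (-S) ^ j := rfl
    have hys : (xs n).comp (↑T⁻¹ : X →L[𝕜] X) = ∑' j : ℕ, (xs n).comp ((-S) ^ j) := by
      exact ContinuousLinearMap.map_tsum ((ContinuousLinearMap.compL 𝕜 X X 𝕜) (xs n))
        (summable_geometric_of_norm_lt_one hSneg)
    have hmem : (xs n).comp (↑T⁻¹ : X →L[𝕜] X) ∈ M := by
      rw [hys]
      exact tsum_mem_of_isClosed M hMclosed _ hpow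
    have hmem' : (xs n).comp (↑T⁻¹ : X →L[𝕜] X) ∈
        closure ((Submodule.span 𝕜 (xs '' {k | n ≤ k}) : Submodule 𝕜 (X →L[𝕜] 𝕜)) :
          Set (X →L[𝕜] 𝕜)) := by
      rw [← Submodule.topologicalClosure_coe]
      exact hmem
    exact image_closure_subset_closure_image NormedSpace.Dual.toWeakDual_continuous
      ⟨_, hmem', rfl⟩
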